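/- Let m > 0, let G : ℝ⁴ → M₄(ℝ) assign to each point a symmetric 4×4 real matrix, let x ∈ ℝ⁴ and q ∈ ℝ³. Let φ : ℝ⁴ → ℝ⁴ be C² on a neighborhood of x with Dφ(y) invertible for all y near x. Let P : ℝ⁴ × ℝ³ → ℝ⁴ be differentiable at (x,q) and satisfy, for all (y,r) in a neighborhood of (x,q): P(y,r)_i = r_i for i = 1,2,3, and ⟨P(y,r), G(y)·P(y,r)⟩ = −m². Set u = G(x)·P(x,q) ∈ ℝ⁴ and assume u₀ ≠ 0. Define Φ : ℝ⁴ × ℝ³ → ℝ⁴ × ℝ³ near (x,q) by Φ(y,r) = (φ(y), q̄(y,r)), where q̄(y,r)_i is the i-th component (i = 1,2,3) of ((Dφ(y))⁻¹)ᵀ · P(y,r). Then Φ is differentiable at (x,q) and the determinant of its derivative DΦ(x,q) (as a linear map ℝ⁷ → ℝ⁷) equals (Dφ(x)·u)₀ / u₀. -/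

import Mathlib

open Matrix Filter Topology

section Helpers

theorem diffDet {n : ℕ} {E : Type*} [NormedAddCommGroup E] [NormedSpace ℝ E]
    {f : E → Matrix (Fin n) (Fin n) ℝ} {x : E}
    (h : ∀ i j, DifferentiableAt ℝ (fun y => f y i j) x) :
    DifferentiableAt ℝ (fun y => (f y).det) x := by
  simp only [Matrix.det_apply']
  apply DifferentiableAt.fun_sum
  intro σ _
  apply DifferentiableAt.const_mul
  exact (HasFDerivAt.finset_prod (fun i _ => (h (σ i) i).hasFDerivAt)).differentiableAt

theorem diffAdj {n : ℕ} {E : Type*} [NormedAddCommGroup E] [NormedSpace ℝ E]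
    {f : E → Matrix (Fin n) (Fin n) ℝ} {x : E}
    (h : ∀ i j, DifferentiableAt ℝ (fun y => f y i j) x) (i j : Fin n) :
    DifferentiableAt ℝ (fun y => (f y).adjugate i j) x := by
  simp only [Matrix.adjugate_apply]
  apply diffDet
  intro a b
  simp only [Matrix.updateRow_apply]
  by_cases hb : a = j <;> simp [hb, h]

theorem diffInv {n : ℕ} {E : Type*} [NormedAddCommGroup E] [NormedSpace ℝ E]
    {f : E → Matrix (Fin n) (Fin n) ℝ} {x : E}
    (h : ∀ i j, DifferentiableAt ℝ (fun y => f y i j) x)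
    (hd : (f x).det ≠ 0) (i j : Fin n) :
    DifferentiableAt ℝ (fun y => (f y)⁻¹ i j) x := by
  have : (fun y => (f y)⁻¹ i j) = fun y => ((f y).det)⁻¹ * (f y).adjugate i j := by
    funext y
    rw [Matrix.inv_def, Matrix.smul_apply, Ring.inverse_eq_inv', smul_eq_mul]
  rw [this]
  exact ((diffDet h).inv hd).mul (diffAdj h i j)

theorem detW {vv : Fin 4 → ℝ} (h0 : vv 0 = 1) :
    (Matrix.of fun α β : Fin 4 => if α = 0 then vv β else if α = β then (1:ℝ) else 0).det = 1 := by
  rw [Matrix.det_of_upperTriangular]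
  · rw [Fin.prod_univ_four]
    simp [h0]
  · intro i j hij
    have hi : i ≠ 0 := by
      rintro rfl; exact (Fin.not_lt_zero j) hij
    have : i ≠ j := fun h => absurd hij (h ▸ lt_irrefl _)
    simp [Matrix.of_apply, hi, this]

theorem WW' {vv : Fin 4 → ℝ} (h0 : vv 0 = 1) :
    (Matrix.of fun α β : Fin 4 => if α = 0 then vv β else if α = β then (1:ℝ) else 0) *
    (Matrix.of fun α β : Fin 4 => if α = 0 then (if β = 0 then 1 else -vv β) else if α = β then (1:ℝ) else 0) = 1 := by
  ext i j
  rw [Matrix.mul_apply, Fin.sum_univ_four]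
  fin_cases i <;> fin_cases j <;> simp [h0, Matrix.one_apply]

theorem det_helper (Jx : Matrix (Fin 4) (Fin 4) ℝ) (hJx : IsUnit Jx.det)
    (u : Fin 4 → ℝ) (hu0 : u 0 ≠ 0) :
    Jx.det * (Matrix.of fun i j : Fin 3 =>
        (Jx⁻¹)ᵀ i.succ 0 * (-(u j.succ) / u 0) + (Jx⁻¹)ᵀ i.succ j.succ).det
      = (Jx *ᵥ u) 0 / u 0 := by
  have hdet : Jx.det ≠ 0 := hJx.ne_zero
  set A : Matrix (Fin 4) (Fin 4) ℝ := (Jx⁻¹)ᵀ with hA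
  set vv : Fin 4 → ℝ := Fin.cons 1 (fun j : Fin 3 => -(u j.succ) / u 0) with hvv
  have h0 : vv 0 = 1 := rfl
  set W : Matrix (Fin 4) (Fin 4) ℝ :=
    Matrix.of fun α β : Fin 4 => if α = 0 then vv β else if α = β then (1:ℝ) else 0 with hW
  set W' : Matrix (Fin 4) (Fin 4) ℝ :=
    Matrix.of fun α β : Fin 4 => if α = 0 then (if β = 0 then 1 else -vv β)
      else if α = β then (1:ℝ) else 0 with hW'
  set N : Matrix (Fin 4) (Fin 4) ℝ := A * W with hN
  have hNdet : N.det = (Jx.det)⁻¹ := by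
    rw [hN, Matrix.det_mul, detW h0, mul_one, hA, Matrix.det_transpose,
      Matrix.det_nonsing_inv, Ring.inverse_eq_inv']
  have hMsub : (Matrix.of fun i j : Fin 3 =>
      A i.succ 0 * (-(u j.succ) / u 0) + A i.succ j.succ)
      = N.submatrix Fin.succ Fin.succ := by
    ext i j
    rw [Matrix.submatrix_apply, hN, Matrix.mul_apply, Fin.sum_univ_succ]
    simp only [hW, Matrix.of_apply, if_pos rfl]
    have : ∀ k : Fin 3, (if (k.succ : Fin 4) = 0 then vv j.succ
        else if (k.succ : Fin 4) = j.succ then (1:ℝ) else 0)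
        = if k = j then 1 else 0 := by
      intro k; simp [Fin.succ_ne_zero, Fin.succ_inj]
    simp only [this, mul_ite, mul_one, mul_zero, Finset.sum_ite_eq' Finset.univ,
      Finset.mem_univ, if_true]
    rw [hvv]
    simp [Fin.cons_succ]
  have hadj : N.adjugate 0 0 = (N.submatrix Fin.succ Fin.succ).det := by
    rw [Matrix.adjugate_apply, Matrix.det_succ_row_zero, Fin.sum_univ_succ]
    have h00 : (N.updateRow 0 (Pi.single 0 1)) 0 0 = 1 := by simp
    have hsucc : ∀ k : Fin 3, (N.updateRow 0 (Pi.single 0 1)) 0 k.succ = 0 := by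
      intro k; simp [Pi.single_apply, (Fin.succ_ne_zero k)]
    rw [h00]
    have : ∀ k : Fin 3, ((-1:ℝ) ^ ((k.succ : Fin 4) : ℕ) *
        (N.updateRow 0 (Pi.single 0 1)) 0 k.succ *
        ((N.updateRow 0 (Pi.single 0 1)).submatrix Fin.succ k.succ.succAbove).det) = 0 := by
      intro k; rw [hsucc k]; ring
    rw [Finset.sum_congr rfl (fun k _ => this k), Finset.sum_const_zero, add_zero]
    have hsub : (N.updateRow 0 (Pi.single 0 1)).submatrix Fin.succ ((0 : Fin 4).succAbove)
        = N.submatrix Fin.succ Fin.succ := by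
      ext i j
      rw [Matrix.submatrix_apply, Matrix.submatrix_apply, Matrix.updateRow_apply,
        Fin.succAbove_zero]
      simp [Fin.succ_ne_zero]
    rw [hsub]; simp
  have hWW' : W * W' = 1 := WW' h0
  have hNinv : N⁻¹ = W' * Jxᵀ := by
    rw [hN, Matrix.mul_inv_rev, Matrix.inv_eq_right_inv hWW', hA,
      ← Matrix.transpose_nonsing_inv, Matrix.nonsing_inv_nonsing_inv _ hJx]
  have hNdet0 : N.det ≠ 0 := by rw [hNdet]; exact inv_ne_zero hdet
  have hadjinv : N.adjugate 0 0 = N.det * (N⁻¹ 0 0) := by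
    rw [Matrix.inv_def, Matrix.smul_apply, Ring.inverse_eq_inv', smul_eq_mul]
    field_simp
  have hN00 : N⁻¹ 0 0 = Jx 0 0 + (u 1 / u 0) * Jx 0 1 + (u 2 / u 0) * Jx 0 2
      + (u 3 / u 0) * Jx 0 3 := by
    rw [hNinv, Matrix.mul_apply, Fin.sum_univ_four]
    have e0 : W' 0 0 = 1 := by simp [hW']
    have e1 : W' 0 1 = -vv 1 := by simp [hW']
    have e2 : W' 0 2 = -vv 2 := by simp [hW']
    have e3 : W' 0 3 = -vv 3 := by simp [hW']
    rw [e0, e1, e2, e3]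
    have v1 : vv 1 = -(u 1) / u 0 := by rw [hvv]; rfl
    have v2 : vv 2 = -(u 2) / u 0 := by rw [hvv]; rfl
    have v3 : vv 3 = -(u 3) / u 0 := by rw [hvv]; rfl
    rw [v1, v2, v3]
    simp [Matrix.transpose_apply]
    ring
  calc Jx.det * (Matrix.of fun i j : Fin 3 =>
        A i.succ 0 * (-(u j.succ) / u 0) + A i.succ j.succ).det
      = Jx.det * (N.det * (N⁻¹ 0 0)) := by rw [hMsub, ← hadj, hadjinv]
    _ = N⁻¹ 0 0 := by rw [hNdet]; field_simp
    _ = (Jx *ᵥ u) 0 / u 0 := by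
        rw [hN00, Matrix.mulVec, dotProduct, Fin.sum_univ_four]
        field_simp

end Helpers

/-- **Proposition 1 in coordinates.** Let `G y` be the (symmetric)
inverse metric at `y`, `P (y, r)` the covariant four-momentum with spatial
components `r` lying on the mass shell `⟨P, G·P⟩ = −m²`, `u = G x ·ᵥ P (x, q)` the
contravariant momentum with `u 0 ≠ 0`, and `φ` a C² coordinate change with
invertible Jacobian `J y` near `x`.  Then the induced transformation
`Φ (y, r) = (φ y, ((J y)⁻¹ᵀ ·ᵥ P (y, r))_{i=1,2,3})` of the mass-shell coordinates
is differentiable at `(x, q)` and `det DΦ(x, q) = (Dφ(x) u)₀ / u₀`. -/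
theorem massShell_coordinateChange_jacobian_det
    (m : ℝ) (hm : 0 < m)
    (G : (Fin 4 → ℝ) → Matrix (Fin 4) (Fin 4) ℝ) (hG : ∀ y, (G y).IsSymm)
    (x : Fin 4 → ℝ) (q : Fin 3 → ℝ)
    (φ : (Fin 4 → ℝ) → (Fin 4 → ℝ))
    (hφ : ∀ᶠ y in 𝓝 x, ContDiffAt ℝ 2 φ y)
    (J : (Fin 4 → ℝ) → Matrix (Fin 4) (Fin 4) ℝ)
    (hJ : ∀ y, J y = LinearMap.toMatrix'
      ((fderiv ℝ φ y : (Fin 4 → ℝ) →L[ℝ] (Fin 4 → ℝ)) : (Fin 4 → ℝ) →ₗ[ℝ] (Fin 4 → ℝ)))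
    (hJinv : ∀ᶠ y in 𝓝 x, IsUnit (J y).det)
    (P : (Fin 4 → ℝ) × (Fin 3 → ℝ) → (Fin 4 → ℝ))
    (hP : DifferentiableAt ℝ P (x, q))
    (hshell : ∀ᶠ z in 𝓝 (x, q),
      (∀ i : Fin 3, P z i.succ = z.2 i) ∧ P z ⬝ᵥ (G z.1 *ᵥ P z) = -(m ^ 2))
    (u : Fin 4 → ℝ) (hu : u = G x *ᵥ P (x, q)) (hu0 : u 0 ≠ 0)
    (Φ : (Fin 4 → ℝ) × (Fin 3 → ℝ) → (Fin 4 → ℝ) × (Fin 3 → ℝ))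
    (hΦ : ∀ z, Φ z = (φ z.1, fun i : Fin 3 => (((J z.1)⁻¹)ᵀ *ᵥ P z) i.succ)) :
    DifferentiableAt ℝ Φ (x, q) ∧
      LinearMap.det
        ((fderiv ℝ Φ (x, q) : ((Fin 4 → ℝ) × (Fin 3 → ℝ)) →L[ℝ] ((Fin 4 → ℝ) × (Fin 3 → ℝ))) :
          ((Fin 4 → ℝ) × (Fin 3 → ℝ)) →ₗ[ℝ] ((Fin 4 → ℝ) × (Fin 3 → ℝ))) =
        (fderiv ℝ φ x u) 0 / u 0 := by
  classical
  have hφx : ContDiffAt ℝ 2 φ x := hφ.self_of_nhds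
  have hφd : DifferentiableAt ℝ φ x := hφx.differentiableAt two_ne_zero
  have hdetx : (J x).det ≠ 0 := hJinv.self_of_nhds.ne_zero
  -- entries of J are differentiable at x
  have hJent : ∀ α β : Fin 4, DifferentiableAt ℝ (fun y => J y α β) x := by
    intro α β
    have heq : (fun y => J y α β)
        = fun y => (fderiv ℝ φ y) (fun k => if k = β then (1:ℝ) else 0) α := by
      funext y
      rw [hJ y, LinearMap.toMatrix'_apply]
      rw [show (Pi.single β (1:ℝ) : Fin 4 → ℝ) = fun k => if k = β then (1:ℝ) else 0 from
        funext fun k => Pi.single_apply β 1 k]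
      rfl
    rw [heq]
    have hfd : DifferentiableAt ℝ (fderiv ℝ φ) x :=
      (hφx.fderiv_right (le_refl 2)).differentiableAt one_ne_zero
    exact (differentiableAt_pi.1
      (hfd.clm_apply (differentiableAt_const _))) α
  have hinvE : ∀ α β : Fin 4, DifferentiableAt ℝ (fun y => (J y)⁻¹ α β) x :=
    fun α β => diffInv hJent hdetx α β
  -- second component of Φ
  set Φ₂ : (Fin 4 → ℝ) × (Fin 3 → ℝ) → (Fin 3 → ℝ) :=
    fun z => fun i : Fin 3 => (((J z.1)⁻¹)ᵀ *ᵥ P z) i.succ with hΦ₂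
  have hΦ₂d : DifferentiableAt ℝ Φ₂ (x, q) := by
    rw [hΦ₂]
    apply differentiableAt_pi.2
    intro i
    have heq : (fun z : (Fin 4 → ℝ) × (Fin 3 → ℝ) => (((J z.1)⁻¹)ᵀ *ᵥ P z) i.succ)
        = fun z => ∑ α : Fin 4, (J z.1)⁻¹ α i.succ * P z α := by
      funext z
      simp [Matrix.mulVec, dotProduct, Matrix.transpose_apply]
    rw [heq]
    apply DifferentiableAt.fun_sum
    intro α _
    have hc : DifferentiableAt ℝ (fun y : (Fin 4 → ℝ) × (Fin 3 → ℝ) => (J y.1)⁻¹ α i.succ) (x, q) :=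
      DifferentiableAt.comp (g := fun y => (J y)⁻¹ α i.succ) (f := Prod.fst) (x, q)
        (hinvE α i.succ) differentiableAt_fst
    exact hc.fun_mul
      (differentiableAt_pi.1 hP α)
  have hΦeq : Φ = fun z => (φ z.1, Φ₂ z) := funext fun z => hΦ z
  have hΦ1d : DifferentiableAt ℝ (fun z : (Fin 4 → ℝ) × (Fin 3 → ℝ) => φ z.1) (x, q) :=
    hφd.comp (x, q) differentiableAt_fst
  have hΦd : DifferentiableAt ℝ Φ (x, q) := by
    rw [hΦeq]; exact hΦ1d.prodMk hΦ₂d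
  refine ⟨hΦd, ?_⟩
  -- the first-component derivative
  have hfst : fderiv ℝ (fun z : (Fin 4 → ℝ) × (Fin 3 → ℝ) => φ z.1) (x, q)
      = (fderiv ℝ φ x).comp (ContinuousLinearMap.fst ℝ (Fin 4 → ℝ) (Fin 3 → ℝ)) := by
    have h : (fun z : (Fin 4 → ℝ) × (Fin 3 → ℝ) => φ z.1) = φ ∘ Prod.fst := rfl
    rw [h, fderiv_comp (x, q) hφd differentiableAt_fst, fderiv_fst]
  -- slice along r ↦ (x, r)
  set Pr : (Fin 3 → ℝ) → (Fin 4 → ℝ) := fun r => P (x, r) with hPrdef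
  have hι : HasFDerivAt (fun r : Fin 3 → ℝ => (x, r))
      (ContinuousLinearMap.inr ℝ (Fin 4 → ℝ) (Fin 3 → ℝ)) q := hasFDerivAt_prodMk_right x q
  have hPr : DifferentiableAt ℝ Pr q := hP.comp q hι.differentiableAt
  set DPr := fderiv ℝ Pr q with hDPrdef
  have hPrD : HasFDerivAt Pr DPr q := hPr.hasFDerivAt
  set D2 := fderiv ℝ Φ₂ (x, q) with hD2def
  have hslice : ∀ᶠ r in 𝓝 q, (∀ i : Fin 3, Pr r i.succ = r i)
      ∧ Pr r ⬝ᵥ (G x *ᵥ Pr r) = -(m ^ 2) :=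
    Filter.Tendsto.eventually (hι.differentiableAt.continuousAt) hshell
  -- spatial components of DPr
  have hwsucc : ∀ (e : Fin 3 → ℝ) (i : Fin 3), DPr e i.succ = e i := by
    intro e i
    have h1 : HasFDerivAt (fun r => Pr r i.succ)
        ((ContinuousLinearMap.proj i.succ : (Fin 4 → ℝ) →L[ℝ] ℝ).comp DPr) q :=
      ((ContinuousLinearMap.proj i.succ : (Fin 4 → ℝ) →L[ℝ] ℝ).hasFDerivAt).comp q hPrD
    have h2 : HasFDerivAt (fun r : Fin 3 → ℝ => r i)
        (ContinuousLinearMap.proj i : (Fin 3 → ℝ) →L[ℝ] ℝ) q :=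
      (ContinuousLinearMap.proj i : (Fin 3 → ℝ) →L[ℝ] ℝ).hasFDerivAt (x := q)
    have heq : fderiv ℝ (fun r => Pr r i.succ) q = fderiv ℝ (fun r : Fin 3 → ℝ => r i) q :=
      Filter.EventuallyEq.fderiv_eq (hslice.mono fun r hr => hr.1 i)
    have hc : (ContinuousLinearMap.proj i.succ : (Fin 4 → ℝ) →L[ℝ] ℝ).comp DPr
        = (ContinuousLinearMap.proj i : (Fin 3 → ℝ) →L[ℝ] ℝ) := by
      rw [← h1.fderiv, heq, h2.fderiv]
    calc DPr e i.succ
        = ((ContinuousLinearMap.proj i.succ : (Fin 4 → ℝ) →L[ℝ] ℝ).comp DPr) e := rfl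
      _ = e i := by rw [hc]; rfl
  -- mass-shell relation: u ⬝ᵥ DPr e = 0
  have hudot : ∀ e : Fin 3 → ℝ, u ⬝ᵥ DPr e = 0 := by
    intro e
    set Dc : Fin 4 → ((Fin 3 → ℝ) →L[ℝ] ℝ) :=
      fun α => (ContinuousLinearMap.proj α : (Fin 4 → ℝ) →L[ℝ] ℝ).comp DPr with hDc
    have hDcd : ∀ α, HasFDerivAt (fun r => Pr r α) (Dc α) q := fun α =>
      ((ContinuousLinearMap.proj α : (Fin 4 → ℝ) →L[ℝ] ℝ).hasFDerivAt).comp q hPrD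
    have hDcval : ∀ α, Dc α e = DPr e α := fun α => rfl
    set L0 : (Fin 3 → ℝ) →L[ℝ] ℝ :=
      ∑ α : Fin 4, ∑ β : Fin 4, G x α β • ((Pr q α) • Dc β + (Pr q β) • Dc α) with hL0
    have hF : HasFDerivAt
        (fun r => ∑ α : Fin 4, ∑ β : Fin 4, G x α β * (Pr r α * Pr r β)) L0 q := by
      apply HasFDerivAt.fun_sum
      intro α _
      apply HasFDerivAt.fun_sum
      intro β _
      exact ((hDcd α).mul (hDcd β)).const_mul (G x α β)
    have hFeq : (fun r => Pr r ⬝ᵥ (G x *ᵥ Pr r))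
        = fun r => ∑ α : Fin 4, ∑ β : Fin 4, G x α β * (Pr r α * Pr r β) := by
      funext r
      simp only [dotProduct, Matrix.mulVec, Finset.mul_sum]
      exact Finset.sum_congr rfl fun α _ => Finset.sum_congr rfl fun β _ => by ring
    have hconst : fderiv ℝ (fun r => Pr r ⬝ᵥ (G x *ᵥ Pr r)) q = 0 := by
      have h : (fun r => Pr r ⬝ᵥ (G x *ᵥ Pr r)) =ᶠ[𝓝 q] fun _ => -(m ^ 2) :=
        hslice.mono fun r hr => hr.2
      rw [h.fderiv_eq]
      exact fderiv_const_apply _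
    have hL00 : L0 = 0 := by rw [← hF.fderiv, ← hFeq]; exact hconst
    have hev : L0 e = 0 := by rw [hL00]; rfl
    have hexp : L0 e = ∑ α : Fin 4, ∑ β : Fin 4,
        G x α β * (Pr q α * DPr e β + Pr q β * DPr e α) := by
      rw [hL0]
      simp only [ContinuousLinearMap.coe_sum', Finset.sum_apply,
        ContinuousLinearMap.add_apply, ContinuousLinearMap.smul_apply, smul_eq_mul]
      rfl
    have h1 : ∑ α : Fin 4, ∑ β : Fin 4, G x α β * (Pr q α * DPr e β)
        = ∑ α : Fin 4, ∑ β : Fin 4, G x α β * (Pr q β * DPr e α) := by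
      rw [Finset.sum_comm]
      exact Finset.sum_congr rfl fun β _ => Finset.sum_congr rfl fun α _ => by
        rw [(hG x).apply α β]
    have h2 : u ⬝ᵥ DPr e = ∑ α : Fin 4, ∑ β : Fin 4, G x α β * (Pr q β * DPr e α) := by
      rw [hu, dotProduct]
      refine Finset.sum_congr rfl fun α _ => ?_
      have : (G x *ᵥ P (x, q)) α = ∑ β : Fin 4, G x α β * P (x, q) β := rfl
      rw [this, Finset.sum_mul]
      exact Finset.sum_congr rfl fun β _ => by ring
    have hsum : L0 e = 2 * (u ⬝ᵥ DPr e) := by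
      rw [hexp]
      have : ∑ α : Fin 4, ∑ β : Fin 4, G x α β * (Pr q α * DPr e β + Pr q β * DPr e α)
          = (∑ α : Fin 4, ∑ β : Fin 4, G x α β * (Pr q α * DPr e β))
            + ∑ α : Fin 4, ∑ β : Fin 4, G x α β * (Pr q β * DPr e α) := by
        rw [← Finset.sum_add_distrib]
        exact Finset.sum_congr rfl fun α _ => by
          rw [← Finset.sum_add_distrib]
          exact Finset.sum_congr rfl fun β _ => by ring
      rw [this, h1, ← h2]
      ring
    have := hsum ▸ hev
    linarith
  -- the 0-component of DPr on basis vectors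
  have hw0 : ∀ j : Fin 3, DPr (Pi.single j 1) 0 = -(u j.succ) / u 0 := by
    intro j
    have h := hudot (Pi.single j 1)
    rw [dotProduct, Fin.sum_univ_succ] at h
    have hs : ∑ k : Fin 3, u k.succ * DPr (Pi.single j 1) k.succ = u j.succ := by
      rw [Finset.sum_congr rfl fun k _ => by rw [hwsucc (Pi.single j 1) k]]
      simp [Pi.single_apply]
    rw [hs] at h
    field_simp
    linarith
  -- the r-block of D2
  set A : Matrix (Fin 4) (Fin 4) ℝ := ((J x)⁻¹)ᵀ with hAdef
  set Aσ : (Fin 4 → ℝ) →L[ℝ] (Fin 3 → ℝ) :=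
    LinearMap.toContinuousLinearMap
      ((LinearMap.funLeft ℝ ℝ Fin.succ).comp A.mulVecLin) with hAσ
  have hAσ_apply : ∀ v : Fin 4 → ℝ, Aσ v = fun i : Fin 3 => (A *ᵥ v) i.succ := fun v => rfl
  have hD2inr : ∀ k, D2 (0, k) = Aσ (DPr k) := by
    have hcomp1 : fderiv ℝ (fun r => Φ₂ (x, r)) q
        = D2.comp (ContinuousLinearMap.inr ℝ (Fin 4 → ℝ) (Fin 3 → ℝ)) := by
      have h : (fun r : Fin 3 → ℝ => Φ₂ (x, r)) = Φ₂ ∘ (fun r => (x, r)) := rfl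
      rw [h, fderiv_comp q hΦ₂d hι.differentiableAt, hι.fderiv]
    have hcomp2 : fderiv ℝ (fun r => Φ₂ (x, r)) q = Aσ.comp DPr := by
      have heq2 : (fun r : Fin 3 → ℝ => Φ₂ (x, r)) = fun r => Aσ (Pr r) := by
        funext r
        rw [hAσ_apply]
      rw [heq2]
      exact (Aσ.hasFDerivAt.comp q hPrD).fderiv
    intro k
    have hc : D2.comp (ContinuousLinearMap.inr ℝ (Fin 4 → ℝ) (Fin 3 → ℝ)) = Aσ.comp DPr := by
      rw [← hcomp1, hcomp2]
    calc D2 (0, k)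
        = (D2.comp (ContinuousLinearMap.inr ℝ (Fin 4 → ℝ) (Fin 3 → ℝ))) k := rfl
      _ = Aσ (DPr k) := by rw [hc]; rfl
  -- value of the M-block
  have hM : ∀ (i j : Fin 3), D2 (0, Pi.single j 1) i
      = A i.succ 0 * (-(u j.succ) / u 0) + A i.succ j.succ := by
    intro i j
    rw [hD2inr, hAσ_apply]
    show (A *ᵥ DPr (Pi.single j 1)) i.succ = _
    have h3 : (A *ᵥ DPr (Pi.single j 1)) i.succ
        = ∑ β : Fin 4, A i.succ β * DPr (Pi.single j 1) β := rfl
    rw [h3, Fin.sum_univ_succ, hw0 j]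
    have hs : ∑ k : Fin 3, A i.succ k.succ * DPr (Pi.single j 1) k.succ = A i.succ j.succ := by
      rw [Finset.sum_congr rfl fun k _ => by rw [hwsucc (Pi.single j 1) k]]
      simp [Pi.single_apply]
    rw [hs]
  -- assemble the matrix
  rw [hΦeq, DifferentiableAt.fderiv_prodMk hΦ1d hΦ₂d, hfst]
  set bb := (Pi.basisFun ℝ (Fin 4)).prod (Pi.basisFun ℝ (Fin 3)) with hbb
  rw [← LinearMap.det_toMatrix bb]
  set Dφc := (fderiv ℝ φ x).comp (ContinuousLinearMap.fst ℝ (Fin 4 → ℝ) (Fin 3 → ℝ)) with hDφc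
  have hbbl : ∀ j : Fin 4, bb (Sum.inl j) = (Pi.single j 1, 0) := by
    intro j
    refine Prod.ext ?_ ?_
    · rw [hbb, Module.Basis.prod_apply_inl_fst, Pi.basisFun_apply]
    · rw [hbb, Module.Basis.prod_apply_inl_snd]
  have hbbr : ∀ j : Fin 3, bb (Sum.inr j) = (0, Pi.single j 1) := by
    intro j
    refine Prod.ext ?_ ?_
    · rw [hbb, Module.Basis.prod_apply_inr_fst]
    · rw [hbb, Module.Basis.prod_apply_inr_snd, Pi.basisFun_apply]
  have hmat : (LinearMap.toMatrix bb bb) ↑(Dφc.prod D2)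
      = Matrix.fromBlocks (J x) 0
          (Matrix.of fun (i : Fin 3) (j : Fin 4) => D2 (Pi.single j 1, 0) i)
          (Matrix.of fun i j : Fin 3 =>
            A i.succ 0 * (-(u j.succ) / u 0) + A i.succ j.succ) := by
    ext s t
    rcases s with i | i <;> rcases t with j | j
    · rw [LinearMap.toMatrix_apply, hbbl j, Matrix.fromBlocks_apply₁₁]
      rw [hbb, Module.Basis.prod_repr_inl, Pi.basisFun_repr]
      show fderiv ℝ φ x (Pi.single j 1) i = J x i j
      rw [hJ x, LinearMap.toMatrix'_apply]
      have h2 : (Pi.single j 1 : Fin 4 → ℝ) = fun k => if k = j then (1:ℝ) else 0 := by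
        funext k
        rw [Pi.single_apply]
      rw [h2]
      rfl
    · rw [LinearMap.toMatrix_apply, hbbr j, Matrix.fromBlocks_apply₁₂]
      rw [hbb, Module.Basis.prod_repr_inl, Pi.basisFun_repr]
      show fderiv ℝ φ x 0 i = (0 : Matrix (Fin 4) (Fin 3) ℝ) i j
      rw [map_zero]
      simp
    · rw [LinearMap.toMatrix_apply, hbbl j, Matrix.fromBlocks_apply₂₁]
      rw [hbb, Module.Basis.prod_repr_inr, Pi.basisFun_repr]
      rfl
    · rw [LinearMap.toMatrix_apply, hbbr j, Matrix.fromBlocks_apply₂₂]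
      rw [hbb, Module.Basis.prod_repr_inr, Pi.basisFun_repr]
      show D2 (0, Pi.single j 1) i = _
      rw [Matrix.of_apply]
      exact hM i j
  rw [hmat, Matrix.det_fromBlocks_zero₁₂]
  have hfinal := det_helper (J x) hJinv.self_of_nhds u hu0
  rw [← hAdef] at hfinal
  rw [hfinal]
  have hJu : (J x) *ᵥ u = fderiv ℝ φ x u := by
    rw [hJ x, ← Matrix.toLin'_apply, Matrix.toLin'_toMatrix']
    rfl
  rw [hJu]
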